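/- Assume that, as T → ∞: (i) ∫_{G̊₃(π/2) ∪ G̊₄(π/2)} (∑_{n ∈ ℕ, 2 ≤ n ≤ ξ} n^{−1/2} cos(φ₁(t)·log n)) · Z(φ₁(t))² · Z̃²(t) dt ∼ (2ε/5 − ε²/50)·U·(log P)²; (ii) G̊₃(π/2) ∪ G̊₄(π/2) is an interval on which t ↦ ∑_{n ∈ ℕ, 2 ≤ n ≤ ξ} n^{−1/2} cos(φ₁(t)·log n) and t ↦ Z(φ₁(t))² are continuous; (iii) the Lebesgue measure of G₃(π/2) ∪ G₄(π/2) is asymptotically U. Then for every sufficiently large T there exist α₃ = α₃(T), α₄ = α₄(T) ∈ G̊₃(π/2) ∪ G̊₄(π/2) such that, as T → ∞, ∑_{n ∈ ℕ, 2 ≤ n ≤ ξ} n^{−1/2} cos(φ₁(α₃)·log n) ∼ (2ε/5 − ε²/50)·(log P)² / |ζ(1/2 + i·φ₁(α₄))|². -/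

import Mathlib

open Real Filter MeasureTheory Finset Asymptotics
open Topology

noncomputable section

/-- `Z(t)^2 = |zeta(1/2 + i t)|^2`, the square of the Hardy function. -/
def Zsq (t : ℝ) : ℝ := ‖riemannZeta (1/2 + t * Complex.I)‖ ^ 2

/-- `U = T^(1/2 + eps)`. -/
def UU (ε T : ℝ) : ℝ := T ^ ((1:ℝ)/2 + ε)

/-- `xi = (T/(2 pi))^(eps/10)`. -/
def XI (ε T : ℝ) : ℝ := (T / (2 * π)) ^ (ε / 10)

/-- `P = sqrt (T/(2 pi))`. -/
def PP (T : ℝ) : ℝ := Real.sqrt (T / (2 * π))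

/-- `theta1 t = (t/2) log (t/(2 pi)) - t/2 - pi/8`. -/
def theta1 (t : ℝ) : ℝ := t / 2 * Real.log (t / (2 * π)) - t / 2 - π / 8

/-- The short trigonometric sum over primes: `∑_{2 ≤ p ≤ ξ, p prime} p^{-1/2} cos (t log p)`. -/
def primeSum (ξ t : ℝ) : ℝ :=
  ∑ p ∈ (Finset.Icc 2 ⌊ξ⌋₊).filter Nat.Prime, (p : ℝ) ^ (-(1:ℝ)/2) * Real.cos (t * Real.log p)

/-- The short trigonometric sum `∑_{2 ≤ n ≤ ξ} n^{-1/2} cos (t log n)`. -/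
def natSum (ξ t : ℝ) : ℝ :=
  ∑ n ∈ Finset.Icc 2 ⌊ξ⌋₊, (n : ℝ) ^ (-(1:ℝ)/2) * Real.cos (t * Real.log n)

/-- The short trigonometric sum `∑_{2 ≤ n ≤ ξ} d(n) n^{-1/2} cos (t log n)`,
where `d(n)` is the number of divisors of `n`. -/
def divSum (ξ t : ℝ) : ℝ :=
  ∑ n ∈ Finset.Icc 2 ⌊ξ⌋₊,
    (n.divisors.card : ℝ) * (n : ℝ) ^ (-(1:ℝ)/2) * Real.cos (t * Real.log n)

/-- `G₃(x; T, U) = ⋃_{ν : T ≤ g_{2ν} ≤ T+U} [g_{2ν}(-x), g_{2ν}(x)]`. -/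
def G3 (g : ℕ → ℝ → ℝ) (ε x T : ℝ) : Set ℝ :=
  ⋃ ν ∈ {ν : ℕ | T ≤ g (2 * ν) 0 ∧ g (2 * ν) 0 ≤ T + UU ε T},
    Set.Icc (g (2 * ν) (-x)) (g (2 * ν) x)

/-- `G₄(y; T, U) = ⋃_{ν : T ≤ g_{2ν+1} ≤ T+U} [g_{2ν+1}(-y), g_{2ν+1}(y)]`. -/
def G4 (g : ℕ → ℝ → ℝ) (ε y T : ℝ) : Set ℝ :=
  ⋃ ν ∈ {ν : ℕ | T ≤ g (2 * ν + 1) 0 ∧ g (2 * ν + 1) 0 ≤ T + UU ε T},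
    Set.Icc (g (2 * ν + 1) (-y)) (g (2 * ν + 1) y)

/-- First mean value theorem for integrals with nonnegative weight. -/
lemma weighted_mvt {a b : ℝ} (hab : a ≤ b) {h w : ℝ → ℝ}
    (hh : ContinuousOn h (Set.Icc a b)) (hw : ContinuousOn w (Set.Icc a b))
    (hw0 : ∀ t ∈ Set.Icc a b, 0 ≤ w t) :
    ∃ α ∈ Set.Icc a b,
      ∫ t in Set.Icc a b, h t * w t = h α * ∫ t in Set.Icc a b, w t := by
  have hne : (Set.Icc a b).Nonempty := Set.nonempty_Icc.mpr hab
  obtain ⟨tm, htm, hmin⟩ := isCompact_Icc.exists_isMinOn hne hh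
  obtain ⟨tM, htM, hmax⟩ := isCompact_Icc.exists_isMaxOn hne hh
  have hwint : IntegrableOn w (Set.Icc a b) := hw.integrableOn_Icc
  have hhwint : IntegrableOn (fun t => h t * w t) (Set.Icc a b) :=
    (hh.mul hw).integrableOn_Icc
  have hW0 : 0 ≤ ∫ t in Set.Icc a b, w t :=
    setIntegral_nonneg measurableSet_Icc hw0
  have hlow : h tm * ∫ t in Set.Icc a b, w t ≤ ∫ t in Set.Icc a b, h t * w t := by
    rw [← MeasureTheory.integral_const_mul]
    exact setIntegral_mono_on (hwint.const_mul _) hhwint measurableSet_Icc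
      (fun t ht => mul_le_mul_of_nonneg_right (isMinOn_iff.mp hmin t ht) (hw0 t ht))
  have hupp : (∫ t in Set.Icc a b, h t * w t) ≤ h tM * ∫ t in Set.Icc a b, w t := by
    rw [← MeasureTheory.integral_const_mul]
    exact setIntegral_mono_on hhwint (hwint.const_mul _) measurableSet_Icc
      (fun t ht => mul_le_mul_of_nonneg_right (isMaxOn_iff.mp hmax t ht) (hw0 t ht))
  rcases eq_or_lt_of_le hW0 with hW | hW
  · refine ⟨a, Set.left_mem_Icc.mpr hab, ?_⟩
    rw [← hW, mul_zero] at hlow hupp ⊢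
    linarith
  · have hr1 : h tm ≤ (∫ t in Set.Icc a b, h t * w t) / ∫ t in Set.Icc a b, w t :=
      (le_div_iff₀ hW).mpr hlow
    have hr2 : (∫ t in Set.Icc a b, h t * w t) / (∫ t in Set.Icc a b, w t) ≤ h tM :=
      (div_le_iff₀ hW).mpr hupp
    have hsub : Set.uIcc tm tM ⊆ Set.Icc a b := Set.uIcc_subset_Icc htm htM
    have hmem : (∫ t in Set.Icc a b, h t * w t) / (∫ t in Set.Icc a b, w t)
        ∈ Set.uIcc (h tm) (h tM) := Set.mem_uIcc.mpr (Or.inl ⟨hr1, hr2⟩)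
    obtain ⟨α, hα, hαr⟩ := intermediate_value_uIcc (hh.mono hsub) hmem
    exact ⟨α, hsub hα, by rw [hαr, div_mul_cancel₀ _ hW.ne']⟩

theorem stmt_7
    (T₀ : ℝ) (φ₁ Zt : ℝ → ℝ)
    (hφmono : StrictMonoOn φ₁ (Set.Ioi T₀))
    (hφderiv : ∀ t ∈ Set.Ioi T₀, HasDerivAt φ₁ (Zt t) t)
    (hφC1 : ContinuousOn Zt (Set.Ioi T₀))
    (hφunb : Tendsto φ₁ atTop atTop)
    (hZt : ∃ E : ℝ → ℝ, E =O[atTop] (fun t => Real.log (Real.log t) / Real.log t) ∧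
      ∀ᶠ t in atTop, Zt t * ((1 + E t) * Real.log t) = Zsq t)
    (g : ℕ → ℝ → ℝ)
    (hgθ : ∀ ν : ℕ, ∀ τ ∈ Set.Icc (-π) π, theta1 (g ν τ) = π / 2 * ν + τ / 2)
    (hgmono : ∀ ν : ℕ, StrictMonoOn (g ν) (Set.Icc (-π) π))
    (ε : ℝ) (hε0 : 0 < ε) (hε1 : ε ≤ 1/10)
    (h1 : (fun T => ∫ t in φ₁ ⁻¹' G3 g ε (π / 2) T ∪ φ₁ ⁻¹' G4 g ε (π / 2) T,
        natSum (XI ε T) (φ₁ t) * Zsq (φ₁ t) * Zt t) ~[atTop]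
      (fun T => (2 * ε / 5 - ε ^ 2 / 50) * UU ε T * Real.log (PP T) ^ 2))
    (h2 : ∀ᶠ T in atTop, ∃ a b : ℝ,
      φ₁ ⁻¹' G3 g ε (π / 2) T ∪ φ₁ ⁻¹' G4 g ε (π / 2) T = Set.Icc a b ∧
      ContinuousOn (fun t => natSum (XI ε T) (φ₁ t)) (Set.Icc a b) ∧
      ContinuousOn (fun t => Zsq (φ₁ t)) (Set.Icc a b))
    (h3 : (fun T => (volume (G3 g ε (π / 2) T ∪ G4 g ε (π / 2) T)).toReal) ~[atTop]
      (fun T => UU ε T)) :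
    ∃ α₁ α₂ : ℝ → ℝ,
      (∀ᶠ T in atTop,
        α₁ T ∈ φ₁ ⁻¹' G3 g ε (π / 2) T ∪ φ₁ ⁻¹' G4 g ε (π / 2) T ∧
        α₂ T ∈ φ₁ ⁻¹' G3 g ε (π / 2) T ∪ φ₁ ⁻¹' G4 g ε (π / 2) T) ∧
      (fun T => natSum (XI ε T) (φ₁ (α₁ T))) ~[atTop]
        (fun T => (2 * ε / 5 - ε ^ 2 / 50) * Real.log (PP T) ^ 2 /
          ‖riemannZeta (1/2 + φ₁ (α₂ T) * Complex.I)‖ ^ 2) := by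
  classical
  have hπ := Real.pi_pos
  -- positivity of U
  have hU0 : ∀ᶠ T in atTop, 0 < UU ε T := by
    filter_upwards [eventually_gt_atTop 0] with T hT
    exact Real.rpow_pos_of_pos hT _
  -- U = o(T)
  have hUdivT : Tendsto (fun T : ℝ => UU ε T / T) atTop (𝓝 0) := by
    have heq : (fun T : ℝ => UU ε T / T) =ᶠ[atTop] fun T => T ^ ((1:ℝ)/2 + ε - 1) := by
      filter_upwards [eventually_gt_atTop 0] with T hT
      rw [UU, Real.rpow_sub hT, Real.rpow_one]
    have h0 : Tendsto (fun T : ℝ => T ^ ((1:ℝ)/2 + ε - 1)) atTop (𝓝 0) := by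
      have he : (1:ℝ)/2 + ε - 1 = -(1 - ((1:ℝ)/2 + ε)) := by ring
      rw [he]
      exact tendsto_rpow_neg_atTop (by linarith)
    exact h0.congr' heq.symm
  -- Lemma L1 : eventually every point of G3 ∪ G4 is > K
  have hL1 : ∀ K : ℝ, ∀ᶠ T in atTop,
      ∀ y ∈ G3 g ε (π / 2) T ∪ G4 g ε (π / 2) T, K < y := by
    intro K
    filter_upwards [(tendsto_order.1 hUdivT).2 (1/4) (by norm_num),
      eventually_gt_atTop 0, eventually_gt_atTop (2 * K),
      isLittleO_iff.mp h3.isLittleO one_half_pos, hU0] with T hU4 hT0 hTK hmb hU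
    intro y hy
    by_contra hyK
    push_neg at hyK
    -- bounds on measure
    have hUT : UU ε T < T / 4 := by
      rw [div_lt_iff₀ hT0] at hU4; linarith
    have hmb' : |(volume (G3 g ε (π / 2) T ∪ G4 g ε (π / 2) T)).toReal - UU ε T|
        ≤ 1/2 * UU ε T := by
      have := hmb
      simp only [Pi.sub_apply, Real.norm_eq_abs] at this
      rwa [abs_of_pos hU] at this
    have habs := abs_le.mp hmb'
    have hμfin : volume (G3 g ε (π / 2) T ∪ G4 g ε (π / 2) T) ≠ ⊤ := by
      intro hcon
      rw [hcon] at hmb'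
      simp only [ENNReal.toReal_top] at hmb'
      rw [zero_sub, abs_neg, abs_of_pos hU] at hmb'
      linarith
    -- find the interval containing y
    have key : ∀ m : ℕ, T ≤ g m 0 →
        Set.Icc (g m (-(π/2))) (g m (π/2)) ⊆ G3 g ε (π / 2) T ∪ G4 g ε (π / 2) T →
        y ∈ Set.Icc (g m (-(π/2))) (g m (π/2)) → False := by
      intro m hm hsub hym
      have hmem0 : (0:ℝ) ∈ Set.Icc (-π) π := ⟨by linarith, by linarith⟩
      have memh : (π/2 : ℝ) ∈ Set.Icc (-π) π := ⟨by linarith, by linarith⟩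
      have hg0h : g m 0 ≤ g m (π/2) :=
        (hgmono m).monotoneOn hmem0 memh (by linarith)
      have hlen : T - K ≤ g m (π/2) - g m (-(π/2)) := by
        have h1' : g m (-(π/2)) ≤ y := hym.1
        linarith
      have hvol : ENNReal.ofReal (T - K)
          ≤ volume (G3 g ε (π / 2) T ∪ G4 g ε (π / 2) T) := by
        calc ENNReal.ofReal (T - K)
            ≤ ENNReal.ofReal (g m (π/2) - g m (-(π/2))) := ENNReal.ofReal_le_ofReal hlen
          _ = volume (Set.Icc (g m (-(π/2))) (g m (π/2))) := (Real.volume_Icc).symm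
          _ ≤ _ := measure_mono hsub
      have htr : T - K ≤ (volume (G3 g ε (π / 2) T ∪ G4 g ε (π / 2) T)).toReal := by
        have := ENNReal.toReal_mono hμfin hvol
        rwa [ENNReal.toReal_ofReal (by linarith)] at this
      linarith
    rcases hy with hy | hy
    · simp only [G3, Set.mem_iUnion, Set.mem_setOf_eq, exists_prop] at hy
      obtain ⟨ν, ⟨hν1, _⟩, hym⟩ := hy
      exact key (2 * ν) hν1
        (fun z hz => Or.inl (by
          simp only [G3, Set.mem_iUnion, Set.mem_setOf_eq, exists_prop]
          exact ⟨ν, ⟨hν1, ‹_›⟩, hz⟩)) hym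
    · simp only [G4, Set.mem_iUnion, Set.mem_setOf_eq, exists_prop] at hy
      obtain ⟨ν, ⟨hν1, _⟩, hym⟩ := hy
      exact key (2 * ν + 1) hν1
        (fun z hz => Or.inr (by
          simp only [G4, Set.mem_iUnion, Set.mem_setOf_eq, exists_prop]
          exact ⟨ν, ⟨hν1, ‹_›⟩, hz⟩)) hym
  -- nonnegativity of Zt for large t
  obtain ⟨E, hEO, hEeq⟩ := hZt
  have hlogdiv : Tendsto (fun t : ℝ => Real.log (Real.log t) / Real.log t) atTop (𝓝 0) :=
    (Real.isLittleO_log_id_atTop.tendsto_div_nhds_zero).comp Real.tendsto_log_atTop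
  have hE0 : Tendsto E atTop (𝓝 0) := hEO.trans_tendsto hlogdiv
  have hZtnn : ∀ᶠ t in atTop, 0 ≤ Zt t := by
    filter_upwards [hEeq, Metric.tendsto_nhds.mp hE0 (1/2) one_half_pos,
      eventually_ge_atTop (Real.exp 1)] with t heq hEt hexp
    have hE' : |E t| < 1/2 := by rwa [Real.dist_eq, sub_zero] at hEt
    have hlog : 1 ≤ Real.log t :=
      (Real.le_log_iff_exp_le (lt_of_lt_of_le (Real.exp_pos 1) hexp)).mpr hexp
    have hEl := (abs_lt.mp hE').1
    have hpos : 0 < (1 + E t) * Real.log t := mul_pos (by linarith) (by linarith)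
    have hz : 0 ≤ Zsq t := by unfold Zsq; positivity
    by_contra hc
    push_neg at hc
    nlinarith [mul_neg_of_neg_of_pos hc hpos]
  obtain ⟨t₁, ht₁⟩ := eventually_atTop.mp hZtnn
  -- the threshold
  set K₁ : ℝ := max T₀ t₁ + 1 with hK₁def
  have hT₀K : T₀ < K₁ := by have := le_max_left T₀ t₁; linarith
  have ht₁K : t₁ ≤ K₁ := by have := le_max_right T₀ t₁; linarith
  have hG1 := hL1 (φ₁ (K₁ + 1))
  -- continuity of φ₁
  have hφcont : ContinuousOn φ₁ (Set.Ioi T₀) :=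
    fun t ht => ((hφderiv t ht).continuousAt).continuousWithinAt
  -- range lemma
  have hrange : ∀ y : ℝ, φ₁ (K₁ + 1) < y → ∃ s, K₁ + 1 ≤ s ∧ φ₁ s = y := by
    intro y hy
    obtain ⟨t₂, ht₂⟩ := ((eventually_ge_atTop (K₁ + 1)).and (hφunb.eventually_ge_atTop y)).exists
    have hsub : Set.Icc (K₁ + 1) t₂ ⊆ Set.Ioi T₀ := fun z hz => by
      simp only [Set.mem_Ioi]; linarith [hz.1]
    obtain ⟨s, hs, hsy⟩ := intermediate_value_Icc ht₂.1 (hφcont.mono hsub) ⟨hy.le, ht₂.2⟩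
    exact ⟨s, hs.1, hsy⟩
  -- positivity of the RHS of h1
  have hc : 0 < 2 * ε / 5 - ε ^ 2 / 50 := by nlinarith
  have hlogP : ∀ᶠ T in atTop, 0 < Real.log (PP T) := by
    filter_upwards [eventually_gt_atTop (2 * π)] with T hT
    apply Real.log_pos
    rw [PP]
    exact (Real.lt_sqrt (by norm_num)).mpr
      (by rw [one_pow]; exact (one_lt_div (by positivity)).mpr hT)
  have hvpos : ∀ᶠ T in atTop,
      0 < (2 * ε / 5 - ε ^ 2 / 50) * UU ε T * Real.log (PP T) ^ 2 := by
    filter_upwards [hU0, hlogP] with T h1' h2'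
    exact mul_pos (mul_pos hc h1') (pow_pos h2' 2)
  have hIne : ∀ᶠ T in atTop,
      (∫ t in φ₁ ⁻¹' G3 g ε (π / 2) T ∪ φ₁ ⁻¹' G4 g ε (π / 2) T,
        natSum (XI ε T) (φ₁ t) * Zsq (φ₁ t) * Zt t) ≠ 0 := by
    filter_upwards [isLittleO_iff.mp h1.isLittleO one_half_pos, hvpos] with T hT hv
    simp only [Pi.sub_apply, Real.norm_eq_abs] at hT
    rw [abs_of_pos hv] at hT
    have := abs_le.mp hT
    intro h0
    rw [h0] at this
    have := this.1
    linarith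
  -- the key eventual statement
  have hKey : ∀ᶠ T in atTop, ∃ α : ℝ,
      (α ∈ φ₁ ⁻¹' G3 g ε (π / 2) T ∪ φ₁ ⁻¹' G4 g ε (π / 2) T) ∧
      natSum (XI ε T) (φ₁ α) * Zsq (φ₁ α) *
          (volume (G3 g ε (π / 2) T ∪ G4 g ε (π / 2) T)).toReal
        = ∫ t in φ₁ ⁻¹' G3 g ε (π / 2) T ∪ φ₁ ⁻¹' G4 g ε (π / 2) T,
            natSum (XI ε T) (φ₁ t) * Zsq (φ₁ t) * Zt t := by
    filter_upwards [h2, hG1, hIne] with T hT2 hTG hTI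
    obtain ⟨a, b, hS, hcont1, hcont2⟩ := hT2
    have hS' : φ₁ ⁻¹' (G3 g ε (π / 2) T ∪ G4 g ε (π / 2) T) = Set.Icc a b := by
      rw [Set.preimage_union]; exact hS
    have hne : (Set.Icc a b).Nonempty := by
      rcases Set.eq_empty_or_nonempty (Set.Icc a b) with he | hne
      · exfalso; apply hTI; rw [hS, he]; simp
      · exact hne
    have hab : a ≤ b := Set.nonempty_Icc.mp hne
    have hbmem : φ₁ b ∈ G3 g ε (π / 2) T ∪ G4 g ε (π / 2) T := by
      have : b ∈ φ₁ ⁻¹' (G3 g ε (π / 2) T ∪ G4 g ε (π / 2) T) := by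
        rw [hS']; exact Set.right_mem_Icc.mpr hab
      exact this
    obtain ⟨s, hs1, hs2⟩ := hrange _ (hTG _ hbmem)
    have hsmem : s ∈ Set.Icc a b := by
      rw [← hS']
      exact Set.mem_preimage.mpr (by rw [hs2]; exact hbmem)
    have haK : K₁ < a := by
      by_contra hcon
      push_neg at hcon
      have hmem : (K₁ + 1) ∈ Set.Icc a b := ⟨by linarith, le_trans hs1 hsmem.2⟩
      have : φ₁ (K₁ + 1) ∈ G3 g ε (π / 2) T ∪ G4 g ε (π / 2) T := by
        rw [← hS'] at hmem; exact hmem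
      exact lt_irrefl _ (hTG _ this)
    have hT₀a : T₀ < a := lt_trans hT₀K haK
    have hIccsub : Set.Icc a b ⊆ Set.Ioi T₀ := fun z hz => by
      simp only [Set.mem_Ioi]; linarith [hz.1]
    have hamem : a ∈ Set.Icc a b := Set.left_mem_Icc.mpr hab
    have hbmem' : b ∈ Set.Icc a b := Set.right_mem_Icc.mpr hab
    have hφab : φ₁ a ≤ φ₁ b :=
      hφmono.monotoneOn (hIccsub hamem) (hIccsub hbmem') hab
    have hGeq : G3 g ε (π / 2) T ∪ G4 g ε (π / 2) T = Set.Icc (φ₁ a) (φ₁ b) := by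
      ext y
      constructor
      · intro hy
        obtain ⟨s', hs'1, hs'2⟩ := hrange y (hTG y hy)
        have hs'mem : s' ∈ Set.Icc a b := by
          rw [← hS']
          exact Set.mem_preimage.mpr (by rw [hs'2]; exact hy)
        rw [← hs'2]
        exact ⟨hφmono.monotoneOn (hIccsub hamem) (hIccsub hs'mem) hs'mem.1,
          hφmono.monotoneOn (hIccsub hs'mem) (hIccsub hbmem') hs'mem.2⟩
      · intro hy
        obtain ⟨z, hz, hzy⟩ := intermediate_value_Icc hab (hφcont.mono hIccsub) hy
        rw [← hzy]
        have : z ∈ φ₁ ⁻¹' (G3 g ε (π / 2) T ∪ G4 g ε (π / 2) T) := by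
          rw [hS']; exact hz
        exact this
    have hm : (volume (G3 g ε (π / 2) T ∪ G4 g ε (π / 2) T)).toReal = φ₁ b - φ₁ a := by
      rw [hGeq, Real.volume_Icc, ENNReal.toReal_ofReal (by linarith)]
    have hZtnn' : ∀ t ∈ Set.Icc a b, 0 ≤ Zt t := fun t ht =>
      ht₁ t (by linarith [ht.1])
    have hZtc : ContinuousOn Zt (Set.Icc a b) := hφC1.mono hIccsub
    have hftc : ∫ t in Set.Icc a b, Zt t = φ₁ b - φ₁ a := by
      rw [MeasureTheory.integral_Icc_eq_integral_Ioc, ← intervalIntegral.integral_of_le hab]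
      apply intervalIntegral.integral_eq_sub_of_hasDerivAt
      · intro t ht
        rw [Set.uIcc_of_le hab] at ht
        exact hφderiv t (hIccsub ht)
      · apply ContinuousOn.intervalIntegrable
        rwa [Set.uIcc_of_le hab]
    obtain ⟨α, hαmem, hαeq⟩ := weighted_mvt hab (hcont1.mul hcont2) hZtc hZtnn'
    have hαeq' : ∫ t in Set.Icc a b, natSum (XI ε T) (φ₁ t) * Zsq (φ₁ t) * Zt t
        = natSum (XI ε T) (φ₁ α) * Zsq (φ₁ α) * ∫ t in Set.Icc a b, Zt t := hαeq
    refine ⟨α, ?_, ?_⟩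
    · rw [hS]; exact hαmem
    · rw [hS, hαeq', hftc, hm]
  -- choice of α
  set A : ℝ → ℝ := fun T =>
    if h : ∃ α : ℝ,
      (α ∈ φ₁ ⁻¹' G3 g ε (π / 2) T ∪ φ₁ ⁻¹' G4 g ε (π / 2) T) ∧
      natSum (XI ε T) (φ₁ α) * Zsq (φ₁ α) *
          (volume (G3 g ε (π / 2) T ∪ G4 g ε (π / 2) T)).toReal
        = ∫ t in φ₁ ⁻¹' G3 g ε (π / 2) T ∪ φ₁ ⁻¹' G4 g ε (π / 2) T,
            natSum (XI ε T) (φ₁ t) * Zsq (φ₁ t) * Zt t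
    then h.choose else 0 with hAdef
  have hA : ∀ᶠ T in atTop,
      (A T ∈ φ₁ ⁻¹' G3 g ε (π / 2) T ∪ φ₁ ⁻¹' G4 g ε (π / 2) T) ∧
      natSum (XI ε T) (φ₁ (A T)) * Zsq (φ₁ (A T)) *
          (volume (G3 g ε (π / 2) T ∪ G4 g ε (π / 2) T)).toReal
        = ∫ t in φ₁ ⁻¹' G3 g ε (π / 2) T ∪ φ₁ ⁻¹' G4 g ε (π / 2) T,
            natSum (XI ε T) (φ₁ t) * Zsq (φ₁ t) * Zt t := by
    filter_upwards [hKey] with T hT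
    simp only [hAdef]
    rw [dif_pos hT]
    exact hT.choose_spec
  refine ⟨A, A, ?_, ?_⟩
  · filter_upwards [hA] with T h
    exact ⟨h.1, h.1⟩
  · show (fun T => natSum (XI ε T) (φ₁ (A T))) ~[atTop]
      (fun T => (2 * ε / 5 - ε ^ 2 / 50) * Real.log (PP T) ^ 2 / Zsq (φ₁ (A T)))
    have hmlb : ∀ᶠ T in atTop,
        1/2 * UU ε T ≤ (volume (G3 g ε (π / 2) T ∪ G4 g ε (π / 2) T)).toReal := by
      filter_upwards [isLittleO_iff.mp h3.isLittleO one_half_pos, hU0] with T hT hU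
      simp only [Pi.sub_apply, Real.norm_eq_abs] at hT
      rw [abs_of_pos hU] at hT
      have := (abs_le.mp hT).1
      linarith
    have hmne : ∀ᶠ T in atTop,
        (volume (G3 g ε (π / 2) T ∪ G4 g ε (π / 2) T)).toReal ≠ 0 := by
      filter_upwards [hmlb, hU0] with T h1' h2'
      intro h0; rw [h0] at h1'; linarith
    have e1 : (fun T => natSum (XI ε T) (φ₁ (A T)) * Zsq (φ₁ (A T))) =ᶠ[atTop]
        (fun T => (∫ t in φ₁ ⁻¹' G3 g ε (π / 2) T ∪ φ₁ ⁻¹' G4 g ε (π / 2) T,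
            natSum (XI ε T) (φ₁ t) * Zsq (φ₁ t) * Zt t) /
          (volume (G3 g ε (π / 2) T ∪ G4 g ε (π / 2) T)).toReal) := by
      filter_upwards [hA, hmne] with T h hm
      rw [eq_div_iff hm]
      exact h.2
    have e2 := h1.div h3
    have e3 : (fun T => (2 * ε / 5 - ε ^ 2 / 50) * UU ε T * Real.log (PP T) ^ 2 / UU ε T)
        =ᶠ[atTop] (fun T => (2 * ε / 5 - ε ^ 2 / 50) * Real.log (PP T) ^ 2) := by
      filter_upwards [hU0] with T hU
      field_simp
    have step1 : (fun T => natSum (XI ε T) (φ₁ (A T)) * Zsq (φ₁ (A T))) ~[atTop]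
        (fun T => (2 * ε / 5 - ε ^ 2 / 50) * Real.log (PP T) ^ 2) :=
      (e1.isEquivalent.trans e2).trans e3.isEquivalent
    have hLpos : ∀ᶠ T in atTop, 0 < (2 * ε / 5 - ε ^ 2 / 50) * Real.log (PP T) ^ 2 := by
      filter_upwards [hlogP] with T hT
      exact mul_pos hc (pow_pos hT 2)
    have hprodpos : ∀ᶠ T in atTop, 0 < natSum (XI ε T) (φ₁ (A T)) * Zsq (φ₁ (A T)) := by
      filter_upwards [isLittleO_iff.mp step1.isLittleO one_half_pos, hLpos] with T hT hL
      simp only [Pi.sub_apply, Real.norm_eq_abs] at hT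
      rw [abs_of_pos hL] at hT
      have := (abs_le.mp hT).1
      linarith
    have hZne : ∀ᶠ T in atTop, Zsq (φ₁ (A T)) ≠ 0 := by
      filter_upwards [hprodpos] with T hT
      intro h0
      rw [h0, mul_zero] at hT
      exact lt_irrefl _ hT
    have e4 := step1.div (IsEquivalent.refl (u := fun T => Zsq (φ₁ (A T))))
    have e5 : (fun T => natSum (XI ε T) (φ₁ (A T))) =ᶠ[atTop]
        (fun T => natSum (XI ε T) (φ₁ (A T)) * Zsq (φ₁ (A T)) / Zsq (φ₁ (A T))) := by
      filter_upwards [hZne] with T hT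
      rw [mul_div_cancel_right₀ _ hT]
    exact e5.isEquivalent.trans e4
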